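/- Let K be an irreducible row-stochastic matrix on ℕ. If π and π′ are both stationary probability mass functions for K, then π = π′ (the stationary distribution, when it exists, is unique). -/

import Mathlib

/-- `n`-step transition probabilities of a kernel on `ℕ`. -/
noncomputable def matpow (K : ℕ → ℕ → ℝ) : ℕ → ℕ → ℕ → ℝ
  | 0 => fun s t => if s = t then 1 else 0
  | n + 1 => fun s t => ∑' r, matpow K n s r * K r t

/-- A row-stochastic matrix on `ℕ`. -/
def RowStochastic (K : ℕ → ℕ → ℝ) : Prop :=
  (∀ s t, 0 ≤ K s t) ∧ ∀ s, HasSum (fun t => K s t) 1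

/-- Irreducibility: every state reaches every state in some number `n ≥ 1` of steps. -/
def ChainIrreducible (K : ℕ → ℕ → ℝ) : Prop :=
  ∀ s t, ∃ n, 1 ≤ n ∧ 0 < matpow K n s t

/-- A probability mass function on `ℕ`. -/
def IsPMF (π : ℕ → ℝ) : Prop :=
  (∀ s, 0 ≤ π s) ∧ HasSum π 1

/-- Stationarity of `π` for `K`: `∑_s π s * K s t = π t` for all `t`. -/
def IsStationaryPMF (K : ℕ → ℕ → ℝ) (π : ℕ → ℝ) : Prop :=
  ∀ t, HasSum (fun s => π s * K s t) (π t)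

lemma matpow_nonneg {K : ℕ → ℕ → ℝ} (hK : ∀ s t, 0 ≤ K s t) :
    ∀ n s t, 0 ≤ matpow K n s t := by
  intro n
  induction n with
  | zero => intro s t; simp only [matpow]; split <;> norm_num
  | succ n ih =>
    intro s t
    simp only [matpow]
    exact tsum_nonneg fun r => mul_nonneg (ih s r) (hK r t)

lemma tsum_pos_exists {f : ℕ → ℝ} (hf : ∀ i, 0 ≤ f i) (h : 0 < ∑' i, f i) :
    ∃ i, 0 < f i := by
  by_contra hc
  push_neg at hc
  have : ∀ i, f i = 0 := fun i => le_antisymm (hc i) (hf i)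
  simp [this] at h

/-- Sign coherence for a summable stationary signed measure: if `h t ≥ 0` and
`K s t > 0` then `h s ≥ 0`. -/
lemma sign_key (K : ℕ → ℕ → ℝ) (hKnn : ∀ s t, 0 ≤ K s t)
    (hKrow : ∀ s, HasSum (fun t => K s t) 1) (h : ℕ → ℝ)
    (habs : Summable (fun s => |h s|))
    (hstat_h : ∀ t, HasSum (fun s => h s * K s t) (h t)) :
    ∀ s t, 0 ≤ h t → 0 < K s t → 0 ≤ h s := by
  have hK1 : ∀ s t, K s t ≤ 1 := fun s t =>
    (Summable.le_tsum (hKrow s).summable t fun j _ => hKnn s j).trans_eq (hKrow s).tsum_eq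
  have hrow_summ : ∀ t, Summable (fun s => |h s| * K s t) := fun t =>
    Summable.of_nonneg_of_le (fun s => mul_nonneg (abs_nonneg _) (hKnn s t))
      (fun s => mul_le_of_le_one_right (abs_nonneg _) (hK1 s t)) habs
  have hfib : ∀ s, (∑' t, |h s| * K s t) = |h s| := by
    intro s
    rw [tsum_mul_left, (hKrow s).tsum_eq, mul_one]
  have hFsum : Summable (fun p : ℕ × ℕ => |h p.1| * K p.1 p.2) := by
    rw [summable_prod_of_nonneg (fun p => mul_nonneg (abs_nonneg _) (hKnn _ _))]
    constructor
    · intro s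
      show Summable fun t => |h s| * K s t
      exact (hKrow s).summable.mul_left _
    · show Summable fun s => ∑' t, |h s| * K s t
      exact habs.congr fun s => (hfib s).symm
  have hFswap : Summable (fun p : ℕ × ℕ => |h p.2| * K p.2 p.1) := by
    have := hFsum.prod_symm
    exact this
  have hg_summ : Summable (fun t => ∑' s, |h s| * K s t) := by
    have h2 := ((summable_prod_of_nonneg
      (f := fun p : ℕ × ℕ => |h p.2| * K p.2 p.1)
      (fun p => mul_nonneg (abs_nonneg _) (hKnn _ _))).mp hFswap).2
    exact h2.congr fun t => rfl
  have hg_tsum : ∑' t, (∑' s, |h s| * K s t) = ∑' s, |h s| := by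
    have e1 : ∑' t, (∑' s, |h s| * K s t)
        = ∑' p : ℕ × ℕ, |h p.2| * K p.2 p.1 := by
      exact (Summable.tsum_prod' hFswap fun t => hrow_summ t).symm
    have e2 : ∑' p : ℕ × ℕ, |h p.2| * K p.2 p.1
        = ∑' p : ℕ × ℕ, |h p.1| * K p.1 p.2 :=
      (Equiv.prodComm ℕ ℕ).tsum_eq (fun p : ℕ × ℕ => |h p.1| * K p.1 p.2)
    have e3 : (∑' p : ℕ × ℕ, |h p.1| * K p.1 p.2)
        = ∑' s, ∑' t, |h s| * K s t := by
      exact Summable.tsum_prod' hFsum fun s =>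
        (show Summable fun t => |h s| * K s t from (hKrow s).summable.mul_left _)
    rw [e1, e2, e3]
    exact tsum_congr hfib
  have hge : ∀ t, |h t| ≤ ∑' s, |h s| * K s t := by
    intro t
    have := norm_tsum_le_tsum_norm (f := fun s => h s * K s t)
      (by simpa [abs_mul, abs_of_nonneg (hKnn _ _)] using hrow_summ t)
    rw [(hstat_h t).tsum_eq] at this
    simpa [abs_mul, abs_of_nonneg (hKnn _ _)] using this
  have heq : ∀ t, (∑' s, |h s| * K s t) = |h t| := by
    intro t
    have hd_summ : Summable (fun t => (∑' s, |h s| * K s t) - |h t|) :=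
      hg_summ.sub habs
    have hd0 : ∑' t, ((∑' s, |h s| * K s t) - |h t|) = 0 := by
      rw [Summable.tsum_sub hg_summ habs, hg_tsum, sub_self]
    have := Summable.le_tsum hd_summ t fun j _ => sub_nonneg.mpr (hge j)
    rw [hd0] at this
    linarith [hge t]
  intro s t ht hKst
  have hB : HasSum (fun s => |h s| * K s t) (h t) := by
    have := (hrow_summ t).hasSum
    rwa [heq t, abs_of_nonneg ht] at this
  have hC : HasSum (fun s => |h s| * K s t - h s * K s t) 0 := by
    simpa using hB.sub (hstat_h t)
  have hzero := (hasSum_zero_iff_of_nonneg (fun s => by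
    have : h s ≤ |h s| := le_abs_self _
    nlinarith [hKnn s t])).mp hC
  have := congrFun hzero s
  simp only [Pi.zero_apply] at this
  have habs_eq : |h s| = h s :=
    mul_right_cancel₀ (ne_of_gt hKst) (sub_eq_zero.mp this)
  rw [← habs_eq]; exact abs_nonneg _

/-- The stationary distribution of an irreducible countable-state chain, when it
exists, is unique. -/
theorem stationary_unique
    (K : ℕ → ℕ → ℝ) (hK : RowStochastic K) (hirr : ChainIrreducible K)
    (π π' : ℕ → ℝ) (hπ : IsPMF π) (hstat : IsStationaryPMF K π)
    (hπ' : IsPMF π') (hstat' : IsStationaryPMF K π') :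
    π = π' := by
  obtain ⟨hKnn, hKrow⟩ := hK
  have hsum0 : HasSum (fun s => π s - π' s) 0 := by
    have := hπ.2.sub hπ'.2
    simpa using this
  have hstat_h : ∀ t, HasSum (fun s => (π s - π' s) * K s t) (π t - π' t) := by
    intro t
    have := (hstat t).sub (hstat' t)
    simpa [sub_mul] using this
  have habs : Summable (fun s => |π s - π' s|) := by
    apply Summable.of_nonneg_of_le (fun s => abs_nonneg _)
      (fun s => ?_) (hπ.2.summable.add hπ'.2.summable)
    calc |π s - π' s| ≤ |π s| + |π' s| := abs_sub _ _
      _ = π s + π' s := by rw [abs_of_nonneg (hπ.1 s), abs_of_nonneg (hπ'.1 s)]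
  have key := sign_key K hKnn hKrow (fun s => π s - π' s) habs hstat_h
  -- propagate along matpow
  have keyn : ∀ n s t, 0 < matpow K n s t → 0 ≤ π t - π' t → 0 ≤ π s - π' s := by
    intro n
    induction n with
    | zero =>
      intro s t hpos ht
      simp only [matpow] at hpos
      split at hpos
      · next heq' => rwa [heq']
      · norm_num at hpos
    | succ n ih =>
      intro s t hpos ht
      simp only [matpow] at hpos
      obtain ⟨r, hr⟩ := tsum_pos_exists
        (fun r => mul_nonneg (matpow_nonneg hKnn n s r) (hKnn r t)) hpos
      have hm : 0 < matpow K n s r := by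
        rcases lt_or_eq_of_le (matpow_nonneg hKnn n s r) with hlt | heq'
        · exact hlt
        · rw [← heq'] at hr; simp at hr
      have hk : 0 < K r t := by
        rcases lt_or_eq_of_le (hKnn r t) with hlt | heq'
        · exact hlt
        · rw [← heq'] at hr; simp at hr
      exact ih s r hm (key r t ht hk)
  -- conclude
  have hzero : ∀ t, π t - π' t = 0 := by
    by_contra hc
    push_neg at hc
    obtain ⟨t0, ht0⟩ := hc
    have hboth : (∃ sp, 0 < π sp - π' sp) ∧ (∃ sm, π sm - π' sm < 0) := by
      rcases ht0.lt_or_gt with hlt | hgt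
      · refine ⟨?_, ⟨t0, hlt⟩⟩
        by_contra hcp
        push_neg at hcp
        have hge0 : -(π t0 - π' t0) ≤ 0 := by
          have := le_hasSum hsum0.neg t0 fun j _ => by
            have := hcp j
            simpa using by linarith
          simpa using this
        linarith
      · refine ⟨⟨t0, hgt⟩, ?_⟩
        by_contra hcm
        push_neg at hcm
        have hle : π t0 - π' t0 ≤ 0 := by
          have := le_hasSum hsum0 t0 fun j _ => hcm j
          linarith
        linarith
    obtain ⟨⟨sp, hsp⟩, ⟨sm, hsm⟩⟩ := hboth
    obtain ⟨n, _, hpos⟩ := hirr sm sp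
    have := keyn n sm sp hpos (le_of_lt hsp)
    linarith
  funext t
  have := hzero t
  linarith
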